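/- Let F be a tree and let G be a graph not containing F⁺ as a minor. If S ⊆ V(G) is such that G[S] contains a spanning subgraph isomorphic to F (in particular |S| = |V(F)|), then there exists a thin (S, |V(F)|)-octopus of G. -/

import Mathlib

open SimpleGraph

/-- A tree-decomposition of the graph `G` over the tree `τ` with bags `X`. -/
structure IsTreeDecomp {V : Type} {T : Type} (G : SimpleGraph V) (τ : SimpleGraph T)
    (X : T → Set V) : Prop where
  isTree : τ.IsTree
  coverV : ∀ v : V, ∃ t, v ∈ X t
  coverE : ∀ ⦃u v : V⦄, G.Adj u v → ∃ t, u ∈ X t ∧ v ∈ X t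
  subtreeConn : ∀ v : V, (τ.induce {t | v ∈ X t}).Connected

/-- The graph `G` has tree-width at most `w`. -/
def TreewidthAtMost {V : Type} (G : SimpleGraph V) (w : ℤ) : Prop :=
  ∃ (T : Type) (τ : SimpleGraph T) (X : T → Set V),
    IsTreeDecomp G τ X ∧ ∀ t, ((X t).ncard : ℤ) ≤ w + 1

/-- `H` is a minor of `G`: there is a family of nonempty, pairwise disjoint, connected
branch sets in `G`, one for each vertex of `H`, with edges of `H` realized by edges of `G`. -/
def IsMinorOf {W V : Type} (H : SimpleGraph W) (G : SimpleGraph V) : Prop :=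
  ∃ f : W → Set V, (∀ w, (f w).Nonempty) ∧ (∀ w, (G.induce (f w)).Connected) ∧
    (Pairwise fun w₁ w₂ => Disjoint (f w₁) (f w₂)) ∧
    ∀ ⦃w₁ w₂⦄, H.Adj w₁ w₂ → ∃ u ∈ f w₁, ∃ x ∈ f w₂, G.Adj u x

/-- `F⁺`: the graph obtained from `F` by adding a new apex vertex adjacent to all of `F`. -/
def addApex {α : Type} (F : SimpleGraph α) : SimpleGraph (Option α) :=
  SimpleGraph.fromRel (fun a b => (a = none ∧ b ≠ none) ∨
    ∃ x y, a = some x ∧ b = some y ∧ F.Adj x y)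

/-- The neighbourhood `N_G(X)` of a vertex set `X`. -/
def nbhd {V : Type} (G : SimpleGraph V) (X : Set V) : Set V :=
  {v | v ∉ X ∧ ∃ u ∈ X, G.Adj u v}


section AuxLemmas

variable {V : Type} (G : SimpleGraph V) (S : Set V)

/-- connected components of `G - S` -/
abbrev Stmt4Comp := (G.induce Sᶜ).ConnectedComponent

/-- the vertex set of a component, as a subset of `V` -/
def stmt4C (k : Stmt4Comp G S) : Set V := Subtype.val '' k.supp

/-- the neighbourhood of a component inside `S` -/
def stmt4N (k : Stmt4Comp G S) : Set V :=
  {s | s ∈ S ∧ ∃ u ∈ stmt4C G S k, G.Adj u s}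

lemma stmt4C_subset (k : Stmt4Comp G S) : stmt4C G S k ⊆ Sᶜ := by
  rintro _ ⟨⟨v, hv⟩, _, rfl⟩; exact hv

lemma stmt4N_subset (k : Stmt4Comp G S) : stmt4N G S k ⊆ S := fun _ hs => hs.1

/-- the bags of the octopus -/
def stmt4X : Option (Stmt4Comp G S × Bool) → Set V
  | none => S
  | some (k, false) => stmt4N G S k
  | some (k, true) => stmt4C G S k ∪ stmt4N G S k

@[simp] lemma stmt4X_none : stmt4X G S none = S := rfl
@[simp] lemma stmt4X_false (k) : stmt4X G S (some (k, false)) = stmt4N G S k := rfl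
@[simp] lemma stmt4X_true (k) :
    stmt4X G S (some (k, true)) = stmt4C G S k ∪ stmt4N G S k := rfl

/-- the spider tree of the octopus -/
def stmt4T : SimpleGraph (Option (Stmt4Comp G S × Bool)) :=
  fromRel fun a b => (∃ k, a = none ∧ b = some (k, false)) ∨
    (∃ k, a = some (k, false) ∧ b = some (k, true))

lemma stmt4T_adj {a b : Option (Stmt4Comp G S × Bool)} :
    (stmt4T G S).Adj a b ↔
      (∃ k, a = none ∧ b = some (k, false)) ∨
      (∃ k, a = some (k, false) ∧ b = some (k, true)) ∨
      (∃ k, b = none ∧ a = some (k, false)) ∨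
      (∃ k, b = some (k, false) ∧ a = some (k, true)) := by
  unfold stmt4T
  rw [fromRel_adj]
  constructor
  · rintro ⟨hne, (h | h) | (h | h)⟩
    exacts [Or.inl h, Or.inr (Or.inl h), Or.inr (Or.inr (Or.inl h)),
      Or.inr (Or.inr (Or.inr h))]
  · rintro (⟨k, rfl, rfl⟩ | ⟨k, rfl, rfl⟩ | ⟨k, rfl, rfl⟩ | ⟨k, rfl, rfl⟩)
    · exact ⟨by simp, Or.inl (Or.inl ⟨k, rfl, rfl⟩)⟩
    · exact ⟨by simp, Or.inl (Or.inr ⟨k, rfl, rfl⟩)⟩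
    · exact ⟨by simp, Or.inr (Or.inl ⟨k, rfl, rfl⟩)⟩
    · exact ⟨by simp, Or.inr (Or.inr ⟨k, rfl, rfl⟩)⟩

lemma stmt4T_reach_root (t : Option (Stmt4Comp G S × Bool)) :
    (stmt4T G S).Reachable t none := by
  match t with
  | none => exact Reachable.refl _
  | some (k, false) =>
      exact ((stmt4T_adj G S).mpr (Or.inr (Or.inr (Or.inl ⟨k, rfl, rfl⟩)))).reachable
  | some (k, true) =>
      exact (((stmt4T_adj G S).mpr
        (Or.inr (Or.inr (Or.inr ⟨k, rfl, rfl⟩)))).reachable).trans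
        (((stmt4T_adj G S).mpr (Or.inr (Or.inr (Or.inl ⟨k, rfl, rfl⟩)))).reachable)

lemma stmt4T_connected : (stmt4T G S).Connected := by
  haveI : Nonempty (Option (Stmt4Comp G S × Bool)) := ⟨none⟩
  exact Connected.mk fun a b => (stmt4T_reach_root G S a).trans (stmt4T_reach_root G S b).symm

/-- a graded graph with unique parents is acyclic -/
lemma graded_isAcyclic {T : Type} {τ : SimpleGraph T} (d : T → ℕ)
    (hgrade : ∀ ⦃a b⦄, τ.Adj a b → d a = d b + 1 ∨ d b = d a + 1)
    (hpar : ∀ ⦃a b c⦄, τ.Adj a b → τ.Adj a c → d a = d b + 1 → d a = d c + 1 → b = c) :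
    τ.IsAcyclic := by
  classical
  suffices key : ∀ (x : T) (c : τ.Walk x x), c.IsCycle → (∀ y ∈ c.support, d y ≤ d x) → False by
    intro v c hc
    obtain ⟨x, hx, hmax⟩ := Finset.exists_max_image c.support.toFinset d
      ⟨v, List.mem_toFinset.mpr c.start_mem_support⟩
    rw [List.mem_toFinset] at hx
    refine key x (c.rotate x hx) (hc.rotate hx) ?_
    intro y hy
    have hrot := Walk.support_rotate c x hx
    refine hmax y (List.mem_toFinset.mpr ?_)
    rw [Walk.support_eq_cons] at hy
    rcases List.mem_cons.mp hy with rfl | hy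
    · exact hx
    · exact List.mem_of_mem_tail (hrot.mem_iff.mp hy)
  intro x c hc hmax
  cases c with
  | nil => exact Walk.IsCycle.not_of_nil hc
  | @cons _ u _ h1 q =>
    rw [Walk.cons_isCycle_iff] at hc
    obtain ⟨hq, he⟩ := hc
    obtain ⟨w, h2, q₂, hq2⟩ := Walk.exists_eq_cons_of_ne h1.ne q.reverse
    have hwq : s(x, w) ∈ q.edges := by
      have : s(x, w) ∈ q.reverse.edges := by rw [hq2]; simp
      rwa [Walk.edges_reverse, List.mem_reverse] at this
    have huw : u ≠ w := by rintro rfl; exact he hwq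
    have hu_mem : u ∈ (Walk.cons h1 q).support := by
      rw [Walk.support_cons]; exact List.mem_cons_of_mem _ q.start_mem_support
    have hw_mem : w ∈ (Walk.cons h1 q).support := by
      have : w ∈ q.reverse.support := by rw [hq2]; simp
      rw [Walk.support_reverse, List.mem_reverse] at this
      rw [Walk.support_cons]; exact List.mem_cons_of_mem _ this
    have hdu : d x = d u + 1 := by
      rcases hgrade h1 with h | h
      · exact h
      · have := hmax u hu_mem; omega
    have hdw : d x = d w + 1 := by
      rcases hgrade h2 with h | h
      · exact h
      · have := hmax w hw_mem; omega
    exact huw (hpar h1 h2 hdu hdw)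

/-- depth function on the spider -/
def stmt4D {α : Type} : Option (α × Bool) → ℕ
  | none => 0
  | some (_, false) => 1
  | some (_, true) => 2

lemma stmt4T_isTree : (stmt4T G S).IsTree := by
  refine ⟨stmt4T_connected G S, graded_isAcyclic stmt4D ?_ ?_⟩
  · intro a b hab
    rcases (stmt4T_adj G S).mp hab with ⟨k, rfl, rfl⟩ | ⟨k, rfl, rfl⟩ | ⟨k, rfl, rfl⟩ |
      ⟨k, rfl, rfl⟩ <;> simp [stmt4D]
  · intro a b c hab hac hb hc
    rcases (stmt4T_adj G S).mp hab with ⟨k, rfl, rfl⟩ | ⟨k, rfl, rfl⟩ | ⟨k, h1, rfl⟩ |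
        ⟨k, h1, rfl⟩ <;>
      rcases (stmt4T_adj G S).mp hac with ⟨k', h2, h3⟩ | ⟨k', h2, h3⟩ | ⟨k', h2, h3⟩ |
        ⟨k', h2, h3⟩ <;>
      simp_all [stmt4D]

lemma induce_singleton_connected (x : V) : (G.induce {x}).Connected := by
  haveI : Nonempty ↥({x} : Set V) := ⟨⟨x, rfl⟩⟩
  refine Connected.mk ?_
  rintro ⟨a, ha⟩ ⟨b, hb⟩
  simp only [Set.mem_singleton_iff] at ha hb
  subst ha; subst hb
  exact Reachable.refl _

lemma stmt4_walk_reach (k : Stmt4Comp G S) :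
    ∀ {x y : ↥(Sᶜ)} (_ : (G.induce Sᶜ).Walk x y) (hx : x.val ∈ stmt4C G S k)
      (hy : y.val ∈ stmt4C G S k),
      (G.induce (stmt4C G S k)).Reachable ⟨x.val, hx⟩ ⟨y.val, hy⟩ := by
  intro x y p
  induction p with
  | nil => intro hx hy; exact Reachable.refl _
  | @cons a z b h q ih =>
    intro hx hy
    have hxk : (G.induce Sᶜ).connectedComponentMk a = k := by
      obtain ⟨x'', hx'', hval⟩ := hx
      obtain rfl : x'' = a := Subtype.ext hval
      rwa [ConnectedComponent.mem_supp_iff] at hx''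
    have hzk : (G.induce Sᶜ).connectedComponentMk z = k :=
      (ConnectedComponent.connectedComponentMk_eq_of_adj h).symm.trans hxk
    have hz : z.val ∈ stmt4C G S k :=
      ⟨z, (ConnectedComponent.mem_supp_iff _ _).mpr hzk, rfl⟩
    have hadj : (G.induce (stmt4C G S k)).Adj ⟨a.val, hx⟩ ⟨z.val, hz⟩ := h
    exact hadj.reachable.trans (ih hz hy)

lemma stmt4C_connected (k : Stmt4Comp G S) : (G.induce (stmt4C G S k)).Connected := by
  obtain ⟨v0, hv0⟩ := k.exists_rep
  have hv0' : v0.val ∈ stmt4C G S k := ⟨v0, (ConnectedComponent.mem_supp_iff _ _).mpr hv0, rfl⟩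
  haveI : Nonempty ↥(stmt4C G S k) := ⟨⟨v0.val, hv0'⟩⟩
  refine Connected.mk ?_
  rintro ⟨a, ha⟩ ⟨b, hb⟩
  obtain ⟨a', ha', rfl⟩ := ha
  obtain ⟨b', hb', rfl⟩ := hb
  rw [ConnectedComponent.mem_supp_iff] at ha' hb'
  obtain ⟨p⟩ := ConnectedComponent.exact (ha'.trans hb'.symm)
  exact stmt4_walk_reach G S k p _ _

end AuxLemmas

/-- if `G` has no `F⁺` minor and `G[S]` has a spanning subgraph isomorphic to
the tree `F`, then `G` has a thin `(S, |V(F)|)`-octopus: an `S`-rooted tree-decomposition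
in which every node with bag of size ≥ |V(F)|+1 is a non-root leaf whose parent's bag has
size ≤ |S|, and no node whose bag has size |S| has a child with bag of size ≥ |V(F)|+1. -/
theorem stmt4 {VF VG : Type} [Fintype VF] [Fintype VG]
    (F : SimpleGraph VF) (hF : F.IsTree) (G : SimpleGraph VG)
    (hminor : ¬ IsMinorOf (addApex F) G)
    (S : Set VG) (φ : VF → VG) (hinj : Function.Injective φ)
    (hrange : Set.range φ = S)
    (hhom : ∀ ⦃a b : VF⦄, F.Adj a b → G.Adj (φ a) (φ b)) :
    ∃ (T : Type) (τ : SimpleGraph T) (X : T → Set VG) (r : T),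
      IsTreeDecomp G τ X ∧ X r = S ∧
      (∀ t, Fintype.card VF + 1 ≤ (X t).ncard →
        t ≠ r ∧ ∃ p, τ.Adj t p ∧ (∀ q, τ.Adj t q → q = p) ∧ (X p).ncard ≤ S.ncard) ∧
      (∀ t c, τ.Adj t c → Fintype.card VF + 1 ≤ (X c).ncard → (X t).ncard ≠ S.ncard) := by
  classical
  have hSfin : S.Finite := Set.toFinite S
  have hScard : S.ncard = Fintype.card VF := by
    rw [← hrange, ← Set.image_univ, Set.ncard_image_of_injective _ hinj, Set.ncard_univ,
      Nat.card_eq_fintype_card]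
  have hφS : ∀ a : VF, φ a ∈ S := fun a => hrange ▸ ⟨a, rfl⟩
  -- the key use of the absence of an `F⁺` minor
  have hNKne : ∀ k : Stmt4Comp G S, stmt4N G S k ≠ S := by
    intro k hk
    apply hminor
    refine ⟨fun o => Option.elim o (stmt4C G S k) (fun a => {φ a}), ?_, ?_, ?_, ?_⟩
    · rintro (_ | a)
      · obtain ⟨v0, hv0⟩ := k.exists_rep
        exact ⟨v0.val, v0, (ConnectedComponent.mem_supp_iff _ _).mpr hv0, rfl⟩
      · exact ⟨φ a, rfl⟩
    · rintro (_ | a)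
      · exact stmt4C_connected G S k
      · exact induce_singleton_connected G (φ a)
    · rintro (_ | a) (_ | b) hne
      · exact absurd rfl hne
      · refine Set.disjoint_left.mpr fun x hx hx2 => ?_
        simp only [Option.elim_none, Option.elim_some, Set.mem_singleton_iff] at hx hx2
        subst hx2
        exact (stmt4C_subset G S k hx) (hφS b)
      · refine Set.disjoint_right.mpr fun x hx hx2 => ?_
        simp only [Option.elim_none, Option.elim_some, Set.mem_singleton_iff] at hx hx2
        subst hx2
        exact (stmt4C_subset G S k hx) (hφS a)
      · show Disjoint {φ a} {φ b}
        refine Set.disjoint_singleton_left.mpr ?_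
        rw [Set.mem_singleton_iff]
        exact fun h => hne (congrArg some (hinj h))
    · intro w₁ w₂ hadj
      unfold addApex at hadj
      rw [fromRel_adj] at hadj
      obtain ⟨hne, h | h⟩ := hadj
      · rcases h with ⟨rfl, h2⟩ | ⟨a, b, rfl, rfl, hab⟩
        · obtain ⟨a, rfl⟩ := Option.ne_none_iff_exists'.mp h2
          have haS : φ a ∈ stmt4N G S k := by rw [hk]; exact hφS a
          obtain ⟨-, u, hu, hua⟩ := haS
          exact ⟨u, hu, φ a, rfl, hua⟩
        · exact ⟨φ a, rfl, φ b, rfl, hhom hab⟩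
      · rcases h with ⟨rfl, h2⟩ | ⟨a, b, rfl, rfl, hab⟩
        · obtain ⟨a, rfl⟩ := Option.ne_none_iff_exists'.mp h2
          have haS : φ a ∈ stmt4N G S k := by rw [hk]; exact hφS a
          obtain ⟨-, u, hu, hua⟩ := haS
          exact ⟨φ a, rfl, u, hu, hua.symm⟩
        · exact ⟨φ b, rfl, φ a, rfl, (hhom hab).symm⟩
  have hNK_lt : ∀ k, (stmt4N G S k).ncard < S.ncard := fun k =>
    Set.ncard_lt_ncard (HasSubset.Subset.ssubset_of_ne (stmt4N_subset G S k) (hNKne k)) hSfin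
  have hbig : ∀ t, Fintype.card VF + 1 ≤ (stmt4X G S t).ncard → ∃ k, t = some (k, true) := by
    rintro (_ | ⟨k, (_ | _)⟩) ht
    · rw [stmt4X_none] at ht; omega
    · rw [stmt4X_false] at ht
      have h2 := hNK_lt k
      omega
    · exact ⟨k, rfl⟩
  refine ⟨Option (Stmt4Comp G S × Bool), stmt4T G S, stmt4X G S, none,
    ⟨stmt4T_isTree G S, ?_, ?_, ?_⟩, rfl, ?_, ?_⟩
  · -- coverV
    intro v
    by_cases hv : v ∈ S
    · exact ⟨none, hv⟩
    · exact ⟨some ((G.induce Sᶜ).connectedComponentMk ⟨v, hv⟩, true),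
        Set.mem_union_left _ ⟨⟨v, hv⟩, (ConnectedComponent.mem_supp_iff _ _).mpr rfl, rfl⟩⟩
  · -- coverE
    intro u v huv
    by_cases hu : u ∈ S <;> by_cases hv : v ∈ S
    · exact ⟨none, hu, hv⟩
    · have hvC : v ∈ stmt4C G S ((G.induce Sᶜ).connectedComponentMk ⟨v, hv⟩) :=
        ⟨⟨v, hv⟩, (ConnectedComponent.mem_supp_iff _ _).mpr rfl, rfl⟩
      exact ⟨some ((G.induce Sᶜ).connectedComponentMk ⟨v, hv⟩, true),
        Set.mem_union_right _ ⟨hu, v, hvC, huv.symm⟩, Set.mem_union_left _ hvC⟩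
    · have huC : u ∈ stmt4C G S ((G.induce Sᶜ).connectedComponentMk ⟨u, hu⟩) :=
        ⟨⟨u, hu⟩, (ConnectedComponent.mem_supp_iff _ _).mpr rfl, rfl⟩
      exact ⟨some ((G.induce Sᶜ).connectedComponentMk ⟨u, hu⟩, true),
        Set.mem_union_left _ huC, Set.mem_union_right _ ⟨hv, u, huC, huv⟩⟩
    · have hadj : (G.induce Sᶜ).Adj ⟨u, hu⟩ ⟨v, hv⟩ := huv
      exact ⟨some ((G.induce Sᶜ).connectedComponentMk ⟨u, hu⟩, true),
        Set.mem_union_left _ ⟨⟨u, hu⟩, (ConnectedComponent.mem_supp_iff _ _).mpr rfl, rfl⟩,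
        Set.mem_union_left _ ⟨⟨v, hv⟩, (ConnectedComponent.mem_supp_iff _ _).mpr
          (ConnectedComponent.connectedComponentMk_eq_of_adj hadj).symm, rfl⟩⟩
  · -- subtreeConn
    intro v
    by_cases hv : v ∈ S
    · haveI : Nonempty ↥{t | v ∈ stmt4X G S t} := ⟨⟨none, hv⟩⟩
      refine Connected.mk ?_
      have key : ∀ t : ↥{t | v ∈ stmt4X G S t},
          ((stmt4T G S).induce {t | v ∈ stmt4X G S t}).Reachable t ⟨none, hv⟩ := by
        rintro ⟨(_ | ⟨k, (_ | _)⟩), ht⟩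
        · exact Reachable.refl _
        · have hadj : ((stmt4T G S).induce {t | v ∈ stmt4X G S t}).Adj
              ⟨some (k, false), ht⟩ ⟨none, hv⟩ :=
            (stmt4T_adj G S).mpr (Or.inr (Or.inr (Or.inl ⟨k, rfl, rfl⟩)))
          exact hadj.reachable
        · have htN : v ∈ stmt4N G S k := by
            rcases ht with h | h
            · exact absurd hv (stmt4C_subset G S k h)
            · exact h
          have h1 : ((stmt4T G S).induce {t | v ∈ stmt4X G S t}).Adj
              ⟨some (k, true), ht⟩ ⟨some (k, false), htN⟩ :=
            (stmt4T_adj G S).mpr (Or.inr (Or.inr (Or.inr ⟨k, rfl, rfl⟩)))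
          have h2 : ((stmt4T G S).induce {t | v ∈ stmt4X G S t}).Adj
              ⟨some (k, false), htN⟩ ⟨none, hv⟩ :=
            (stmt4T_adj G S).mpr (Or.inr (Or.inr (Or.inl ⟨k, rfl, rfl⟩)))
          exact h1.reachable.trans h2.reachable
      exact fun a b => (key a).trans (key b).symm
    · have hmem : v ∈ stmt4X G S (some ((G.induce Sᶜ).connectedComponentMk ⟨v, hv⟩, true)) :=
        Set.mem_union_left _ ⟨⟨v, hv⟩, (ConnectedComponent.mem_supp_iff _ _).mpr rfl, rfl⟩
      haveI : Nonempty ↥{t | v ∈ stmt4X G S t} :=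
        ⟨⟨some ((G.induce Sᶜ).connectedComponentMk ⟨v, hv⟩, true), hmem⟩⟩
      refine Connected.mk ?_
      have key : ∀ t : ↥{t | v ∈ stmt4X G S t},
          t.val = some ((G.induce Sᶜ).connectedComponentMk ⟨v, hv⟩, true) := by
        rintro ⟨(_ | ⟨k, (_ | _)⟩), ht⟩
        · exact absurd ht hv
        · exact absurd (stmt4N_subset G S k ht) hv
        · rcases ht with h | h
          · obtain ⟨x', hx', hval⟩ := h
            obtain rfl : x' = ⟨v, hv⟩ := Subtype.ext hval
            rw [ConnectedComponent.mem_supp_iff] at hx'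
            rw [hx']
          · exact absurd (stmt4N_subset G S k h) hv
      intro a b
      have hab : a = b := Subtype.ext ((key a).trans (key b).symm)
      rw [hab]
  · -- big bags are leaves with small parents
    intro t ht
    obtain ⟨k, rfl⟩ := hbig t ht
    refine ⟨by simp, some (k, false),
      (stmt4T_adj G S).mpr (Or.inr (Or.inr (Or.inr ⟨k, rfl, rfl⟩))), ?_, ?_⟩
    · intro q hq
      rcases (stmt4T_adj G S).mp hq with ⟨k', h1, h2⟩ | ⟨k', h1, h2⟩ | ⟨k', h1, h2⟩ |
        ⟨k', h1, h2⟩ <;> simp_all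
    · rw [stmt4X_false]
      exact (hNK_lt k).le
  · -- thinness
    intro t c hadj hc
    obtain ⟨k, rfl⟩ := hbig c hc
    have hteq : t = some (k, false) := by
      rcases (stmt4T_adj G S).mp hadj with ⟨k', h1, h2⟩ | ⟨k', h1, h2⟩ | ⟨k', h1, h2⟩ |
        ⟨k', h1, h2⟩ <;> simp_all
    subst hteq
    rw [stmt4X_false]
    exact (hNK_lt k).ne
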